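/- Let G be a connected simple graph on a vertex set of size n ≥ 2 that is d-regular with d ≥ 1, and let D be its diameter (the maximum over pairs of vertices of the graph distance). Let A = (1/d)·M where M is the adjacency matrix of G. Then for every nonzero vector v ∈ ℝⁿ with ∑ᵢ vᵢ = 0 and every λ ∈ ℝ with A·v = λ·v, one has λ ≤ 1 − 1/(d·D·n). -/

import Mathlib

lemma tele_sq {V : Type*} {G : SimpleGraph V} (v : V → ℝ) :
    ∀ {a b : V} (p : G.Walk a b),
      (v b - v a) ^ 2 ≤ (p.length : ℝ) *
        (p.darts.map (fun e => (v e.toProd.2 - v e.toProd.1) ^ 2)).sum := by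
  intro a b p
  induction p with
  | nil => simp
  | @cons a c b h q ih =>
    have hS : (0 : ℝ) ≤ (q.darts.map (fun e => (v e.toProd.2 - v e.toProd.1) ^ 2)).sum :=
      List.sum_nonneg (by
        intro x hx
        obtain ⟨e, -, rfl⟩ := List.mem_map.mp hx
        positivity)
    simp only [SimpleGraph.Walk.darts_cons, SimpleGraph.Walk.length_cons, List.map_cons,
      List.sum_cons, Nat.cast_add, Nat.cast_one]
    rcases Nat.eq_zero_or_pos q.length with h0 | hpos
    · have hy2 : (v b - v c) ^ 2 ≤ 0 := by
        have := ih
        rw [h0] at this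
        simpa using this
      have hy : v b - v c = 0 := by nlinarith [sq_nonneg (v b - v c)]
      have hb : v b = v c := by linarith
      rw [hb, h0]
      simp only [Nat.cast_zero]
      nlinarith [hS, sq_nonneg (v c - v a)]
    · have hL1 : (1 : ℝ) ≤ (q.length : ℝ) := by exact_mod_cast hpos
      have hL0 : (0 : ℝ) ≤ (q.length : ℝ) := by positivity
      nlinarith [ih, hS, sq_nonneg ((q.length : ℝ) * (v c - v a) - (v b - v c)),
        mul_nonneg hL0 hS]




/-- For a connected `d`-regular simple graph `G` on `n ≥ 2` vertices with diameter `D`,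
every eigenvalue of the random-walk transition matrix `A = (1/d)·M` (with `M` the
adjacency matrix) whose eigenvector has coordinates summing to zero is at most
`1 − 1/(d·D·n)`. -/
theorem stmt_4 (n : ℕ) (hn : 2 ≤ n) (d : ℕ) (hd : 1 ≤ d)
    (G : SimpleGraph (Fin n)) [DecidableRel G.Adj]
    (hconn : G.Connected) (hreg : G.IsRegularOfDegree d)
    (A : Matrix (Fin n) (Fin n) ℝ)
    (hA : A = (1 / (d : ℝ)) • G.adjMatrix ℝ) :
    ∀ v : Fin n → ℝ, v ≠ 0 → (∑ i, v i) = 0 →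
      ∀ lam : ℝ, A.mulVec v = lam • v →
        lam ≤ 1 - 1 / ((d : ℝ) * (G.diam : ℝ) * (n : ℝ)) := by
  intro v hv hsum lam heig
  classical
  set M := G.adjMatrix ℝ with hM
  have hd0 : (0:ℝ) < (d:ℝ) := by exact_mod_cast lt_of_lt_of_le one_pos hd
  have hdne : (d:ℝ) ≠ 0 := ne_of_gt hd0
  -- eigen equation for M
  have hMv : M.mulVec v = ((d:ℝ) * lam) • v := by
    have h1 : A.mulVec v = (1/(d:ℝ)) • M.mulVec v := by
      rw [hA, Matrix.smul_mulVec]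
    have h2 : (1/(d:ℝ)) • M.mulVec v = lam • v := h1 ▸ heig
    have := congrArg (fun w => (d:ℝ) • w) h2
    simp only [smul_smul] at this
    rw [mul_one_div_cancel hdne, one_smul] at this
    exact this
  have hMvi : ∀ i, ∑ j, M i j * v j = ((d:ℝ)*lam) * v i := by
    intro i
    have := congrFun hMv i
    simpa [Matrix.mulVec, dotProduct] using this
  -- row sums
  have hsym : ∀ i j, M i j = M j i := by
    intro i j
    simp [hM, SimpleGraph.adjMatrix_apply, SimpleGraph.adj_comm]
  have hrowsum : ∀ i, ∑ j, M i j = (d:ℝ) := by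
    intro i
    have h1 : ∑ j, M i j = ∑ j ∈ G.neighborFinset i, (1:ℝ) := by
      have := G.adjMatrix_mulVec_apply i (fun _ => (1:ℝ))
      simpa [Matrix.mulVec, dotProduct, hM] using this
    rw [h1]
    simp [hreg i]
  set Sig2 := ∑ i, (v i)^2 with hSig2
  -- quadratic form identity
  have key : ∀ i, ∑ j, M i j * (v i - v j)^2
      = (d:ℝ) * (v i)^2 + (∑ j, M i j * (v j)^2) - 2 * (((d:ℝ)*lam) * ((v i)*(v i))) := by
    intro i
    have e1 : ∑ j, M i j * (v i - v j)^2
        = (∑ j, M i j * (v i)^2) + (∑ j, M i j * (v j)^2)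
          - ∑ j, 2 * (v i * (M i j * v j)) := by
      rw [← Finset.sum_add_distrib, ← Finset.sum_sub_distrib]
      exact Finset.sum_congr rfl fun j _ => by ring
    rw [e1]
    congr 1
    · congr 1
      rw [← Finset.sum_mul, hrowsum]
    · have : ∑ j, 2 * (v i * (M i j * v j)) = 2 * (v i * (∑ j, M i j * v j)) := by
        rw [Finset.mul_sum, Finset.mul_sum]
      rw [this, hMvi i]
      ring
  have hmid : ∑ i, ∑ j, M i j * (v j)^2 = (d:ℝ) * Sig2 := by
    rw [Finset.sum_comm]
    have h2 : ∀ j, ∑ i, M i j * (v j)^2 = (d:ℝ) * (v j)^2 := by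
      intro j
      rw [← Finset.sum_mul]
      congr 1
      rw [show (∑ i, M i j) = ∑ i, M j i from Finset.sum_congr rfl fun i _ => hsym i j]
      exact hrowsum j
    rw [Finset.sum_congr rfl fun j _ => h2 j, hSig2, Finset.mul_sum]
  have hSid : ∑ i, ∑ j, M i j * (v i - v j)^2 = 2*(d:ℝ)*(1 - lam) * Sig2 := by
    rw [Finset.sum_congr rfl fun i _ => key i]
    rw [Finset.sum_sub_distrib, Finset.sum_add_distrib, hmid]
    have ha : ∑ i, (d:ℝ) * (v i)^2 = (d:ℝ) * Sig2 := by rw [hSig2, Finset.mul_sum]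
    have hb : ∑ i, 2 * (((d:ℝ)*lam) * ((v i)*(v i))) = 2 * ((d:ℝ)*lam) * Sig2 := by
      rw [hSig2, Finset.mul_sum]
      exact Finset.sum_congr rfl fun i _ => by ring
    rw [ha, hb]
    ring
  -- total dart sum equals S
  have totdart : ∑ dd : G.Dart, (v dd.toProd.2 - v dd.toProd.1)^2
      = ∑ i, ∑ j, M i j * (v i - v j)^2 := by
    have h1 : ∑ i, ∑ j, M i j * (v i - v j)^2
        = ∑ p ∈ Finset.univ.filter (fun p : Fin n × Fin n => G.Adj p.1 p.2),
          (v p.2 - v p.1)^2 := by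
      rw [Finset.sum_filter, Fintype.sum_prod_type]
      refine Finset.sum_congr rfl fun i _ => Finset.sum_congr rfl fun j _ => ?_
      by_cases h : G.Adj i j
      · simp only [hM, SimpleGraph.adjMatrix_apply, if_pos h]
        ring
      · simp [hM, SimpleGraph.adjMatrix_apply, if_neg h]
    rw [h1]
    refine Finset.sum_bij' (fun (dd : G.Dart) (_ : dd ∈ Finset.univ) => dd.toProd)
      (fun p hp => SimpleGraph.Dart.mk p (Finset.mem_filter.mp hp).2)
      (fun dd _ => ?_) (fun p hp => Finset.mem_univ _)
      (fun dd _ => ?_) (fun p hp => ?_) (fun dd _ => rfl)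
    · exact Finset.mem_filter.mpr ⟨Finset.mem_univ _, dd.adj⟩
    · rfl
    · rfl
  -- extremal coordinates
  have hn2 : (2:ℝ) ≤ (n:ℝ) := by exact_mod_cast hn
  have hn0 : (0:ℝ) < (n:ℝ) := by linarith
  have hNE : Nonempty (Fin n) := ⟨⟨0, lt_of_lt_of_le (by norm_num) hn⟩⟩
  obtain ⟨i0, -, hi0⟩ := Finset.exists_max_image Finset.univ v
    ⟨Classical.arbitrary _, Finset.mem_univ _⟩
  obtain ⟨j0, -, hj0⟩ := Finset.exists_min_image Finset.univ v
    ⟨Classical.arbitrary _, Finset.mem_univ _⟩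
  have hmax : ∀ k, v k ≤ v i0 := fun k => hi0 k (Finset.mem_univ k)
  have hmin : ∀ k, v j0 ≤ v k := fun k => hj0 k (Finset.mem_univ k)
  have hi0nonneg : 0 ≤ v i0 := by
    by_contra hneg
    push_neg at hneg
    have h1 : ∑ k : Fin n, v k ≤ ∑ _k : Fin n, v i0 := Finset.sum_le_sum fun k _ => hmax k
    rw [hsum, Finset.sum_const, Finset.card_univ, Fintype.card_fin, nsmul_eq_mul] at h1
    nlinarith
  have hj0nonpos : v j0 ≤ 0 := by
    by_contra hneg
    push_neg at hneg
    have h1 : ∑ _k : Fin n, v j0 ≤ ∑ k : Fin n, v k := Finset.sum_le_sum fun k _ => hmin k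
    rw [hsum, Finset.sum_const, Finset.card_univ, Fintype.card_fin, nsmul_eq_mul] at h1
    nlinarith
  have hcoord : ∀ k, (v k)^2 ≤ (v i0 - v j0)^2 := by
    intro k
    nlinarith [mul_nonneg (show (0:ℝ) ≤ (v i0 - v j0) - v k by linarith [hmax k])
      (show (0:ℝ) ≤ (v i0 - v j0) + v k by linarith [hmin k])]
  have hSig2n : Sig2 ≤ (n:ℝ) * (v i0 - v j0)^2 := by
    rw [hSig2]
    calc ∑ k, (v k)^2 ≤ ∑ _k : Fin n, (v i0 - v j0)^2 := Finset.sum_le_sum fun k _ => hcoord k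
    _ = (n:ℝ) * (v i0 - v j0)^2 := by
        rw [Finset.sum_const, Finset.card_univ, Fintype.card_fin, nsmul_eq_mul]
  have hSig2pos : 0 < Sig2 := by
    obtain ⟨k, hk⟩ := Function.ne_iff.mp hv
    have hk' : v k ≠ 0 := hk
    exact Finset.sum_pos' (fun k _ => sq_nonneg _) ⟨k, Finset.mem_univ _, by positivity⟩
  -- shortest path
  obtain ⟨q, hq⟩ := hconn.exists_walk_length_eq_dist j0 i0
  have hqpath : q.IsPath := q.isPath_of_length_eq_dist hq
  have hediam : G.ediam ≠ ⊤ := by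
    obtain ⟨a, b, hab⟩ := G.exists_edist_eq_ediam_of_finite
    rw [← hab, SimpleGraph.edist_ne_top_iff_reachable]
    exact hconn a b
  have hdistD : G.dist j0 i0 ≤ G.diam := SimpleGraph.dist_le_diam hediam
  have hD1 : 1 ≤ G.diam := by
    have h0n : (0:ℕ) < n := by omega
    have h1n : (1:ℕ) < n := by omega
    have hne : (⟨0, h0n⟩ : Fin n) ≠ ⟨1, h1n⟩ := by
      simp [Fin.ext_iff]
    have hpos := hconn.pos_dist_of_ne hne
    exact le_trans hpos (SimpleGraph.dist_le_diam hediam)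
  have hD0 : (0:ℝ) < (G.diam : ℝ) := by exact_mod_cast lt_of_lt_of_le one_pos hD1
  have hlen : (q.length : ℝ) ≤ (G.diam : ℝ) := by
    have : q.length ≤ G.diam := by rw [hq]; exact hdistD
    exact_mod_cast this
  -- dart sums along the path
  set F : G.Dart → ℝ := fun dd => (v dd.toProd.2 - v dd.toProd.1)^2 with hF
  set dsum := (q.darts.map F).sum with hdsum
  have hdsum0 : 0 ≤ dsum := List.sum_nonneg (by
    intro x hx
    obtain ⟨e, -, rfl⟩ := List.mem_map.mp hx
    positivity)
  have htele : (v i0 - v j0)^2 ≤ (q.length : ℝ) * dsum := tele_sq v q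
  have hedges : (q.darts.map SimpleGraph.Dart.edge).Nodup := hqpath.isTrail.edges_nodup
  have hdnodup : q.darts.Nodup := List.Nodup.of_map _ hedges
  have hinj := List.inj_on_of_nodup_map hedges
  have hLnodup : (q.darts ++ q.darts.map SimpleGraph.Dart.symm).Nodup := by
    rw [List.nodup_append]
    refine ⟨hdnodup, (List.nodup_map_iff
      (SimpleGraph.Dart.symm_involutive (G := G)).injective).mpr hdnodup, ?_⟩
    intro x hx y hx2 hxy
    subst hxy
    obtain ⟨e, he, rfl⟩ := List.mem_map.mp hx2
    exact SimpleGraph.Dart.symm_ne e (hinj hx he (congrFun (SimpleGraph.Dart.edge_comp_symm (G := G)) e))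
  have hFsymm : ∀ dd : G.Dart, F dd.symm = F dd := by
    intro dd
    show (v dd.toProd.swap.2 - v dd.toProd.swap.1)^2 = (v dd.toProd.2 - v dd.toProd.1)^2
    rw [Prod.snd_swap, Prod.fst_swap]
    ring
  have hmapsymm : ((q.darts.map SimpleGraph.Dart.symm).map F).sum = dsum := by
    rw [List.map_map, hdsum]
    congr 1
    exact List.map_congr_left fun dd _ => hFsymm dd
  have h2dsum : 2 * dsum ≤ ∑ dd : G.Dart, F dd := by
    have hsplit : ((q.darts ++ q.darts.map SimpleGraph.Dart.symm).map F).sum = 2 * dsum := by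
      rw [List.map_append, List.sum_append, hmapsymm, hdsum]
      ring
    have hle : ((q.darts ++ q.darts.map SimpleGraph.Dart.symm).map F).sum
        ≤ ∑ dd : G.Dart, F dd := by
      rw [← List.sum_toFinset F hLnodup]
      exact Finset.sum_le_sum_of_subset_of_nonneg (Finset.subset_univ _)
        (fun x _ _ => by positivity)
    linarith
  have hSle : 2 * dsum ≤ 2*(d:ℝ)*(1-lam) * Sig2 := by
    rw [← hSid, ← totdart]
    exact h2dsum
  have hdsumle : dsum ≤ (d:ℝ)*(1-lam) * Sig2 := by linarith
  have hmain : (v i0 - v j0)^2 ≤ (G.diam : ℝ) * ((d:ℝ)*(1-lam) * Sig2) :=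
    calc (v i0 - v j0)^2 ≤ (q.length : ℝ) * dsum := htele
    _ ≤ (G.diam : ℝ) * dsum := mul_le_mul_of_nonneg_right hlen hdsum0
    _ ≤ (G.diam : ℝ) * ((d:ℝ)*(1-lam) * Sig2) :=
        mul_le_mul_of_nonneg_left hdsumle (le_of_lt hD0)
  have hfin : Sig2 ≤ (n:ℝ) * ((G.diam : ℝ) * ((d:ℝ)*(1-lam) * Sig2)) :=
    calc Sig2 ≤ (n:ℝ) * (v i0 - v j0)^2 := hSig2n
    _ ≤ _ := mul_le_mul_of_nonneg_left hmain (le_of_lt hn0)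
  have hX : (0:ℝ) < (d:ℝ) * (G.diam:ℝ) * (n:ℝ) := mul_pos (mul_pos hd0 hD0) hn0
  have h1x : 1 ≤ ((d:ℝ) * (G.diam:ℝ) * (n:ℝ)) * (1 - lam) := by
    nlinarith [hSig2pos, hfin]
  have hfrac : 1 / ((d:ℝ) * (G.diam:ℝ) * (n:ℝ)) ≤ 1 - lam := by
    rw [div_le_iff₀ hX, mul_comm]
    exact h1x
  linarith
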